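/- If F and F' are {1,2}-valued random variables that are conditionally independent given Y, then the expected Correlated Agreement score of F against the peer reference F' is an affine rescaling of its score against the ground truth: S̄(F, F') = (1 − FNR(F') − FPR(F')) · S̄(F, Y). -/

import Mathlib

open MeasureTheory

/-- Probability of an event, as a real number. -/
noncomputable def pr {Ω : Type*} [MeasurableSpace Ω] (μ : Measure Ω) (s : Set Ω) : ℝ :=
  (μ s).toReal

/-- A `{1,2}`-valued random label. -/
def IsBinaryLabel {Ω : Type*} (F : Ω → ℕ) : Prop :=
  ∀ ω, F ω = 1 ∨ F ω = 2

/-- False negative rate: `FNR(F) = ℙ(F=2 ∣ Y=1)`. -/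
noncomputable def fnr {Ω : Type*} [MeasurableSpace Ω] (μ : Measure Ω) (F Y : Ω → ℕ) : ℝ :=
  pr μ {ω | F ω = 2 ∧ Y ω = 1} / pr μ {ω | Y ω = 1}

/-- False positive rate: `FPR(F) = ℙ(F=1 ∣ Y=2)`. -/
noncomputable def fpr {Ω : Type*} [MeasurableSpace Ω] (μ : Measure Ω) (F Y : Ω → ℕ) : ℝ :=
  pr μ {ω | F ω = 1 ∧ Y ω = 2} / pr μ {ω | Y ω = 2}

/-- The Correlated Agreement correlation matrix:
`Δ(F,G)(k,l) = ℙ(F=k, G=l) − ℙ(F=k)·ℙ(G=l)`. -/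
noncomputable def caDelta {Ω : Type*} [MeasurableSpace Ω] (μ : Measure Ω)
    (F G : Ω → ℕ) (k l : ℕ) : ℝ :=
  pr μ {ω | F ω = k ∧ G ω = l} - pr μ {ω | F ω = k} * pr μ {ω | G ω = l}

/-- The expected Correlated Agreement score of `F` against `G`:
`S̄(F,G) = ℙ(F = G) − ℙ(F=1)ℙ(G=1) − ℙ(F=2)ℙ(G=2)`. -/
noncomputable def caScore {Ω : Type*} [MeasurableSpace Ω] (μ : Measure Ω)
    (F G : Ω → ℕ) : ℝ :=
  pr μ {ω | F ω = G ω} - pr μ {ω | F ω = 1} * pr μ {ω | G ω = 1}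
    - pr μ {ω | F ω = 2} * pr μ {ω | G ω = 2}

/-- `F` and `G` are conditionally independent given `Y`:
`ℙ(F=k, G=l ∣ Y=y) = ℙ(F=k ∣ Y=y)·ℙ(G=l ∣ Y=y)` for all `k,l,y ∈ {1,2}`. -/
def CondIndepGiven {Ω : Type*} [MeasurableSpace Ω] (μ : Measure Ω)
    (F G Y : Ω → ℕ) : Prop :=
  ∀ k l y : ℕ, k ∈ ({1, 2} : Set ℕ) → l ∈ ({1, 2} : Set ℕ) → y ∈ ({1, 2} : Set ℕ) →
    pr μ {ω | F ω = k ∧ G ω = l ∧ Y ω = y} / pr μ {ω | Y ω = y} =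
      (pr μ {ω | F ω = k ∧ Y ω = y} / pr μ {ω | Y ω = y}) *
        (pr μ {ω | G ω = l ∧ Y ω = y} / pr μ {ω | Y ω = y})

/-- if `F` and `F'` are conditionally independent given `Y`, then the
expected CA score of `F` against the peer reference `F'` is an affine rescaling of its
score against the ground truth: `S̄(F,F') = (1 − FNR(F') − FPR(F')) · S̄(F,Y)`. -/

private lemma core_alg (q1 q2 u1 u2 v1 v2 s1 s2 t1 t2 : ℝ) (hq1 : 0 < q1) (hq2 : 0 < q2)
    (h1 : u1 + u2 = q1) (h2 : v1 + v2 = q2) (h3 : s1 + s2 = q1) (h4 : t1 + t2 = q2)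
    (h5 : q1 + q2 = 1) :
    (u1 * s1 / q1 + v1 * t1 / q2) + (u2 * s2 / q1 + v2 * t2 / q2)
      - (u1 + v1) * (s1 + t1) - (u2 + v2) * (s2 + t2)
    = (1 - s2 / q1 - t1 / q2) * ((u1 + v2) - (u1 + v1) * q1 - (u2 + v2) * q2) := by
  have hu2 : u2 = q1 - u1 := by linarith
  have hv2 : v2 = q2 - v1 := by linarith
  have hs2 : s2 = q1 - s1 := by linarith
  have ht2 : t2 = q2 - t1 := by linarith
  have hq2' : q2 = 1 - q1 := by linarith
  subst hu2 hv2 hs2 ht2 hq2'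
  field_simp
  ring

private lemma pr_union {Ω : Type*} [MeasurableSpace Ω] (μ : Measure Ω)
    [IsProbabilityMeasure μ] (s t : Set Ω) (ht : MeasurableSet t) (hd : Disjoint s t) :
    pr μ (s ∪ t) = pr μ s + pr μ t := by
  unfold pr
  rw [measure_union hd ht, ENNReal.toReal_add (measure_ne_top μ s) (measure_ne_top μ t)]

theorem ca_score_peer_affine_rescaling

    {Ω : Type*} [MeasurableSpace Ω] (μ : Measure Ω) [IsProbabilityMeasure μ]
    (F F' Y : Ω → ℕ)
    (hFmeas : Measurable F) (hF'meas : Measurable F') (hYmeas : Measurable Y)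
    (hFbin : IsBinaryLabel F) (hF'bin : IsBinaryLabel F') (hYbin : IsBinaryLabel Y)
    (hY1pos : 0 < pr μ {ω | Y ω = 1}) (hY1lt : pr μ {ω | Y ω = 1} < 1)
    (hci : CondIndepGiven μ F F' Y) :
    caScore μ F F' = (1 - fnr μ F' Y - fpr μ F' Y) * caScore μ F Y := by
    -- measurability of basic sets
  have mF : ∀ k : ℕ, MeasurableSet {ω | F ω = k} := fun k => hFmeas (measurableSet_singleton k)
  have mF' : ∀ k : ℕ, MeasurableSet {ω | F' ω = k} := fun k => hF'meas (measurableSet_singleton k)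
  have mY : ∀ k : ℕ, MeasurableSet {ω | Y ω = k} := fun k => hYmeas (measurableSet_singleton k)
  -- abbreviations
  set q1 := pr μ {ω | Y ω = 1} with hq1def
  set q2 := pr μ {ω | Y ω = 2} with hq2def
  set u1 := pr μ {ω | F ω = 1 ∧ Y ω = 1} with hu1def
  set u2 := pr μ {ω | F ω = 2 ∧ Y ω = 1} with hu2def
  set v1 := pr μ {ω | F ω = 1 ∧ Y ω = 2} with hv1def
  set v2 := pr μ {ω | F ω = 2 ∧ Y ω = 2} with hv2def
  set s1 := pr μ {ω | F' ω = 1 ∧ Y ω = 1} with hs1def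
  set s2 := pr μ {ω | F' ω = 2 ∧ Y ω = 1} with hs2def
  set t1 := pr μ {ω | F' ω = 1 ∧ Y ω = 2} with ht1def
  set t2 := pr μ {ω | F' ω = 2 ∧ Y ω = 2} with ht2def
  -- q1 + q2 = 1
  have hsum : q1 + q2 = 1 := by
    have hset : ({ω | Y ω = 1} ∪ {ω | Y ω = 2} : Set Ω) = Set.univ := by
      ext ω; simpa using hYbin ω
    have hd : Disjoint {ω | Y ω = 1} {ω | Y ω = 2} := by
      rw [Set.disjoint_left]; intro ω h1 h2; simp only [Set.mem_setOf_eq] at h1 h2; omega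
    have := pr_union μ {ω | Y ω = 1} {ω | Y ω = 2} (mY 2) hd
    rw [hset] at this
    have huniv : pr μ (Set.univ : Set Ω) = 1 := by
      unfold pr; simp
    rw [huniv] at this; linarith
  have hq2pos : 0 < q2 := by linarith
  -- splitting helper results
  have splitY : ∀ (G : Ω → ℕ), IsBinaryLabel G → Measurable G → ∀ k : ℕ,
      pr μ {ω | G ω = k} = pr μ {ω | G ω = k ∧ Y ω = 1} + pr μ {ω | G ω = k ∧ Y ω = 2} := by
    intro G hGbin hGmeas k
    have hset : ({ω | G ω = k} : Set Ω) =
        {ω | G ω = k ∧ Y ω = 1} ∪ {ω | G ω = k ∧ Y ω = 2} := by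
      ext ω; simp only [Set.mem_setOf_eq, Set.mem_union]
      rcases hYbin ω with h | h <;> simp [h]
    have hm : MeasurableSet {ω | G ω = k ∧ Y ω = 2} := by
      have : {ω | G ω = k ∧ Y ω = 2} = {ω | G ω = k} ∩ {ω | Y ω = 2} := by
        ext ω; simp [Set.mem_setOf_eq, Set.mem_inter_iff]
      rw [this]; exact (hGmeas (measurableSet_singleton k)).inter (mY 2)
    have hd : Disjoint {ω | G ω = k ∧ Y ω = 1} {ω | G ω = k ∧ Y ω = 2} := by
      rw [Set.disjoint_left]; intro ω h1 h2
      simp only [Set.mem_setOf_eq] at h1 h2; omega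
    rw [hset, pr_union μ _ _ hm hd]
  -- q1 = u1 + u2 etc (split {Y = y} by a binary label G)
  have splitG : ∀ (G : Ω → ℕ), IsBinaryLabel G → Measurable G → ∀ y : ℕ,
      pr μ {ω | Y ω = y} = pr μ {ω | G ω = 1 ∧ Y ω = y} + pr μ {ω | G ω = 2 ∧ Y ω = y} := by
    intro G hGbin hGmeas y
    have hset : ({ω | Y ω = y} : Set Ω) =
        {ω | G ω = 1 ∧ Y ω = y} ∪ {ω | G ω = 2 ∧ Y ω = y} := by
      ext ω; simp only [Set.mem_setOf_eq, Set.mem_union]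
      rcases hGbin ω with h | h <;> simp [h]
    have hm : MeasurableSet {ω | G ω = 2 ∧ Y ω = y} := by
      have : {ω | G ω = 2 ∧ Y ω = y} = {ω | G ω = 2} ∩ {ω | Y ω = y} := by
        ext ω; simp [Set.mem_setOf_eq, Set.mem_inter_iff]
      rw [this]; exact (hGmeas (measurableSet_singleton 2)).inter (mY y)
    have hd : Disjoint {ω | G ω = 1 ∧ Y ω = y} {ω | G ω = 2 ∧ Y ω = y} := by
      rw [Set.disjoint_left]; intro ω h1 h2
      simp only [Set.mem_setOf_eq] at h1 h2; omega
    rw [hset, pr_union μ _ _ hm hd]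
  have hU : u1 + u2 = q1 := (splitG F hFbin hFmeas 1).symm
  have hV : v1 + v2 = q2 := (splitG F hFbin hFmeas 2).symm
  have hS : s1 + s2 = q1 := (splitG F' hF'bin hF'meas 1).symm
  have hT : t1 + t2 = q2 := (splitG F' hF'bin hF'meas 2).symm
  have hF1 : pr μ {ω | F ω = 1} = u1 + v1 := splitY F hFbin hFmeas 1
  have hF2 : pr μ {ω | F ω = 2} = u2 + v2 := splitY F hFbin hFmeas 2
  have hF'1 : pr μ {ω | F' ω = 1} = s1 + t1 := splitY F' hF'bin hF'meas 1
  have hF'2 : pr μ {ω | F' ω = 2} = s2 + t2 := splitY F' hF'bin hF'meas 2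
  -- atoms from conditional independence
  have hq1ne : q1 ≠ 0 := ne_of_gt hY1pos
  have hq2ne : q2 ≠ 0 := ne_of_gt hq2pos
  have atom : ∀ k l y : ℕ, k ∈ ({1, 2} : Set ℕ) → l ∈ ({1, 2} : Set ℕ) →
      y ∈ ({1, 2} : Set ℕ) →
      pr μ {ω | F ω = k ∧ F' ω = l ∧ Y ω = y} =
        pr μ {ω | F ω = k ∧ Y ω = y} * pr μ {ω | F' ω = l ∧ Y ω = y} /
          pr μ {ω | Y ω = y} := by
    intro k l y hk hl hy
    have hqy : pr μ {ω | Y ω = y} ≠ 0 := by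
      rcases hy with hy | hy <;> subst hy
      · exact hq1ne
      · exact hq2ne
    have h := hci k l y hk hl hy
    field_simp at h
    rw [eq_div_iff hqy]
    have h' : (pr μ {ω | F ω = k ∧ F' ω = l ∧ Y ω = y} * pr μ {ω | Y ω = y}) *
        pr μ {ω | Y ω = y} =
        (pr μ {ω | F ω = k ∧ Y ω = y} * pr μ {ω | F' ω = l ∧ Y ω = y}) *
          pr μ {ω | Y ω = y} := by linear_combination pr μ {ω | Y ω = y} * h
    exact mul_right_cancel₀ hqy h'
  have a111 := atom 1 1 1 (by simp) (by simp) (by simp)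
  have a112 := atom 1 1 2 (by simp) (by simp) (by simp)
  have a221 := atom 2 2 1 (by simp) (by simp) (by simp)
  have a222 := atom 2 2 2 (by simp) (by simp) (by simp)
  -- P(F = F') decomposition into four atoms
  have hagree : pr μ {ω | F ω = F' ω} =
      pr μ {ω | F ω = 1 ∧ F' ω = 1 ∧ Y ω = 1} + pr μ {ω | F ω = 1 ∧ F' ω = 1 ∧ Y ω = 2}
      + (pr μ {ω | F ω = 2 ∧ F' ω = 2 ∧ Y ω = 1}
        + pr μ {ω | F ω = 2 ∧ F' ω = 2 ∧ Y ω = 2}) := by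
    have mset : ∀ k l y : ℕ, MeasurableSet {ω | F ω = k ∧ F' ω = l ∧ Y ω = y} := by
      intro k l y
      have : {ω | F ω = k ∧ F' ω = l ∧ Y ω = y} =
          {ω | F ω = k} ∩ ({ω | F' ω = l} ∩ {ω | Y ω = y}) := by
        ext ω; simp [Set.mem_setOf_eq, Set.mem_inter_iff]
      rw [this]; exact (mF k).inter ((mF' l).inter (mY y))
    have hset11 : ({ω | F ω = 1 ∧ F' ω = 1} : Set Ω) =
        {ω | F ω = 1 ∧ F' ω = 1 ∧ Y ω = 1} ∪ {ω | F ω = 1 ∧ F' ω = 1 ∧ Y ω = 2} := by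
      ext ω; simp only [Set.mem_setOf_eq, Set.mem_union]
      rcases hYbin ω with h | h <;> simp [h]
    have hset22 : ({ω | F ω = 2 ∧ F' ω = 2} : Set Ω) =
        {ω | F ω = 2 ∧ F' ω = 2 ∧ Y ω = 1} ∪ {ω | F ω = 2 ∧ F' ω = 2 ∧ Y ω = 2} := by
      ext ω; simp only [Set.mem_setOf_eq, Set.mem_union]
      rcases hYbin ω with h | h <;> simp [h]
    have hagreeset : ({ω | F ω = F' ω} : Set Ω) =
        {ω | F ω = 1 ∧ F' ω = 1} ∪ {ω | F ω = 2 ∧ F' ω = 2} := by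
      ext ω; simp only [Set.mem_setOf_eq, Set.mem_union]
      constructor
      · intro h; rcases hFbin ω with h1 | h1 <;> [left; right] <;> omega
      · intro h; omega
    have m22 : MeasurableSet {ω | F ω = 2 ∧ F' ω = 2} := by
      have : {ω | F ω = 2 ∧ F' ω = 2} = {ω | F ω = 2} ∩ {ω | F' ω = 2} := by
        ext ω; simp [Set.mem_setOf_eq, Set.mem_inter_iff]
      rw [this]; exact (mF 2).inter (mF' 2)
    have hd : Disjoint ({ω | F ω = 1 ∧ F' ω = 1} : Set Ω) {ω | F ω = 2 ∧ F' ω = 2} := by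
      rw [Set.disjoint_left]; intro ω h1 h2
      simp only [Set.mem_setOf_eq] at h1 h2; omega
    have hd11 : Disjoint ({ω | F ω = 1 ∧ F' ω = 1 ∧ Y ω = 1} : Set Ω)
        {ω | F ω = 1 ∧ F' ω = 1 ∧ Y ω = 2} := by
      rw [Set.disjoint_left]; intro ω h1 h2
      simp only [Set.mem_setOf_eq] at h1 h2; omega
    have hd22 : Disjoint ({ω | F ω = 2 ∧ F' ω = 2 ∧ Y ω = 1} : Set Ω)
        {ω | F ω = 2 ∧ F' ω = 2 ∧ Y ω = 2} := by
      rw [Set.disjoint_left]; intro ω h1 h2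
      simp only [Set.mem_setOf_eq] at h1 h2; omega
    rw [hagreeset, pr_union μ _ _ m22 hd, hset11, hset22,
      pr_union μ _ _ (mset 1 1 2) hd11, pr_union μ _ _ (mset 2 2 2) hd22]
  -- P(F = Y) decomposition
  have hFYset : pr μ {ω | F ω = Y ω} = u1 + v2 := by
    have hset : ({ω | F ω = Y ω} : Set Ω) =
        {ω | F ω = 1 ∧ Y ω = 1} ∪ {ω | F ω = 2 ∧ Y ω = 2} := by
      ext ω; simp only [Set.mem_setOf_eq, Set.mem_union]
      constructor
      · intro h; rcases hFbin ω with h1 | h1 <;> [left; right] <;> omega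
      · intro h; omega
    have m22 : MeasurableSet {ω | F ω = 2 ∧ Y ω = 2} := by
      have : {ω | F ω = 2 ∧ Y ω = 2} = {ω | F ω = 2} ∩ {ω | Y ω = 2} := by
        ext ω; simp [Set.mem_setOf_eq, Set.mem_inter_iff]
      rw [this]; exact (mF 2).inter (mY 2)
    have hd : Disjoint ({ω | F ω = 1 ∧ Y ω = 1} : Set Ω) {ω | F ω = 2 ∧ Y ω = 2} := by
      rw [Set.disjoint_left]; intro ω h1 h2
      simp only [Set.mem_setOf_eq] at h1 h2; omega
    rw [hset, pr_union μ _ _ m22 hd]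
  -- put everything together
  unfold caScore fnr fpr
  rw [hagree, a111, a112, a221, a222, hF1, hF2, hF'1, hF'2, hFYset]
  rw [← hq1def, ← hq2def, ← hu1def, ← hu2def, ← hv1def, ← hv2def,
    ← hs1def, ← hs2def, ← ht1def, ← ht2def]
  exact core_alg q1 q2 u1 u2 v1 v2 s1 s2 t1 t2 hY1pos hq2pos hU hV hS hT hsum
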